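/- Let X be a finite ground set and f : 2^X → ℝ a monotone nondecreasing set function whose marginal gains f_j(S) = f(S ∪ {j}) − f(S) are strictly positive for every S ⊂ X and j ∈ X \ S. Suppose c > 0 satisfies f_j(T) ≤ c · f_j(S) for all S ⊆ T ⊂ X and j ∈ X \ T. Then for any sets S ⊂ T ⊆ X with |T \ S| = r ≥ 1, it holds that f(T) − f(S) ≤ (1/r)·(1 + (r−1)·c) · Σ_{j ∈ T\S} f_j(S). -/

import Mathlib

open Finset

/-- For a monotone nondecreasing set function with strictly positive
marginal gains and multiplicative weak-submodularity bound `c > 0`, for any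
`S ⊂ T` with `|T \ S| = r ≥ 1` we have
`f(T) − f(S) ≤ (1/r)·(1 + (r−1)·c) · Σ_{j ∈ T\S} f_j(S)`. -/
theorem stmt_0 {α : Type*} [Fintype α] [DecidableEq α]
    (f : Finset α → ℝ)
    (hmono : ∀ S T : Finset α, S ⊆ T → f S ≤ f T)
    (hpos : ∀ (S : Finset α) (j : α), j ∉ S → 0 < f (insert j S) - f S)
    (c : ℝ) (hc : 0 < c)
    (hweak : ∀ (S T : Finset α) (j : α), S ⊆ T → j ∉ T →
      f (insert j T) - f T ≤ c * (f (insert j S) - f S))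
    (S T : Finset α) (hST : S ⊂ T) (r : ℕ) (hr : 1 ≤ r)
    (hrcard : (T \ S).card = r) :
    f T - f S ≤ (1 / (r : ℝ)) * (1 + ((r : ℝ) - 1) * c) *
      ∑ j ∈ T \ S, (f (insert j S) - f S) := by
  set total := ∑ j ∈ T \ S, (f (insert j S) - f S) with htotal
  have lemA : ∀ V U : Finset α, S ⊆ U →
      f (U ∪ V) - f U ≤ c * ∑ j ∈ V \ U, (f (insert j S) - f S) := by
    intro V
    induction V using Finset.induction_on with
    | empty => intro U hSU; simp
    | insert _ _ haV =>
      rename_i a V' IH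
      intro U hSU
      by_cases haU : a ∈ U ∪ V'
      · have huni : U ∪ insert a V' = U ∪ V' := by
          rw [Finset.union_insert, Finset.insert_eq_self.mpr haU]
        have hset : insert a V' \ U = V' \ U := by
          rcases Finset.mem_union.mp haU with h | h
          · exact Finset.insert_sdiff_of_mem _ h
          · rw [Finset.insert_eq_self.mpr h]
        rw [huni, hset]
        exact IH U hSU
      · have huni : U ∪ insert a V' = insert a (U ∪ V') := by
          rw [Finset.union_insert]
        have hset : insert a V' \ U = insert a (V' \ U) := by
          ext x
          simp only [Finset.mem_sdiff, Finset.mem_insert, Finset.mem_union] at *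
          constructor
          · rintro ⟨h1 | h1, h2⟩
            · exact Or.inl h1
            · exact Or.inr ⟨h1, h2⟩
          · rintro (h1 | ⟨h1, h2⟩)
            · subst h1; exact ⟨Or.inl rfl, fun hx => haU (Or.inl hx)⟩
            · exact ⟨Or.inr h1, h2⟩
        have han : a ∉ V' \ U := fun h => haV (Finset.mem_sdiff.mp h).1
        rw [huni, hset, Finset.sum_insert han, mul_add]
        have h1 : f (insert a (U ∪ V')) - f (U ∪ V') ≤ c * (f (insert a S) - f S) :=
          hweak S (U ∪ V') a (hSU.trans Finset.subset_union_left) haU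
        have h2 := IH U hSU
        linarith
  have hkey : ∀ k ∈ T \ S,
      f T - f S ≤ (f (insert k S) - f S) + c * (total - (f (insert k S) - f S)) := by
    intro k hk
    obtain ⟨hkT, hkS⟩ := Finset.mem_sdiff.mp hk
    have hU : S ⊆ insert k S := Finset.subset_insert _ _
    have huni : insert k S ∪ T = T := by
      apply Finset.union_eq_right.mpr
      exact Finset.insert_subset hkT hST.subset
    have hA := lemA T (insert k S) hU
    rw [huni] at hA
    have hset : T \ insert k S = (T \ S).erase k := by
      ext x
      simp only [Finset.mem_sdiff, Finset.mem_insert, Finset.mem_erase]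
      tauto
    rw [hset] at hA
    have hsumerase := Finset.add_sum_erase (T \ S) (fun j => f (insert j S) - f S) hk
    have : ∑ j ∈ (T \ S).erase k, (f (insert j S) - f S)
        = total - (f (insert k S) - f S) := by
      rw [htotal]; linarith
    rw [this] at hA
    linarith
  have hsum : ∑ _k ∈ T \ S, (f T - f S)
      ≤ ∑ k ∈ T \ S, ((f (insert k S) - f S) + c * (total - (f (insert k S) - f S))) :=
    Finset.sum_le_sum hkey
  rw [Finset.sum_const, hrcard, nsmul_eq_mul] at hsum
  have hsum2 : ∑ k ∈ T \ S, ((f (insert k S) - f S) + c * (total - (f (insert k S) - f S)))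
      = (1 + ((r : ℝ) - 1) * c) * total := by
    have : ∀ k ∈ T \ S, (f (insert k S) - f S) + c * (total - (f (insert k S) - f S))
        = (1 - c) * (f (insert k S) - f S) + c * total := by intro k _; ring
    rw [Finset.sum_congr rfl this, Finset.sum_add_distrib, ← Finset.mul_sum, ← htotal,
      Finset.sum_const, hrcard, nsmul_eq_mul]
    ring
  rw [hsum2] at hsum
  have hrpos : (0 : ℝ) < r := by exact_mod_cast hr
  calc f T - f S = (1 / (r : ℝ)) * ((r : ℝ) * (f T - f S)) := by field_simp
    _ ≤ (1 / (r : ℝ)) * ((1 + ((r : ℝ) - 1) * c) * total) := by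
        apply mul_le_mul_of_nonneg_left hsum; positivity
    _ = (1 / (r : ℝ)) * (1 + ((r : ℝ) - 1) * c) * total := by ring
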